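/- Let f : ℝ → ℝ be continuous, strictly increasing with f(0)=0, F(t) = ∫₀ᵗ f(s) ds, and h(t) = ∫₀ᵗ F(s)^(-1/2) ds finite for all t ≥ 0. Define U : [0,∞) → [0,∞) by U(t) = h⁻¹(√2 · t). Then U is twice differentiable on (0,∞), satisfies U''(t) = f(U(t)) for all t > 0, U(0) = 0, and (U'(t))² = 2F(U(t)). -/

import Mathlib

open MeasureTheory Set

/-- The one-dimensional profile `U = h⁻¹(√2 t)` solves `U'' = f(U)`, `U(0) = 0`,
and `(U')² = 2 F(U)`. Here `h` being the inverse is encoded by `h (U t) = √2 t`. -/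
theorem stmt4 (f F h U : ℝ → ℝ) (hf_cont : Continuous f) (hf_mono : StrictMono f)
    (hf0 : f 0 = 0)
    (hF : ∀ t, F t = ∫ s in (0:ℝ)..t, f s)
    (hfin : ∀ t ≥ (0:ℝ), IntegrableOn (fun s => (F s) ^ (-(1:ℝ)/2)) (Set.Ioc 0 t) volume)
    (hh : ∀ t, h t = ∫ s in (0:ℝ)..t, (F s) ^ (-(1:ℝ)/2))
    (hU_nonneg : ∀ t ≥ (0:ℝ), 0 ≤ U t)
    (hU_inv : ∀ t ≥ (0:ℝ), h (U t) = Real.sqrt 2 * t) :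
    U 0 = 0 ∧
    ∃ U' : ℝ → ℝ, ∀ t > (0:ℝ),
      HasDerivAt U (U' t) t ∧ HasDerivAt U' (f (U t)) t ∧ (U' t) ^ 2 = 2 * F (U t) := by
  have sqrt2pos : (0:ℝ) < Real.sqrt 2 := Real.sqrt_pos.2 (by norm_num)
  have fpos : ∀ s > (0:ℝ), 0 < f s := fun s hs => by
    have := hf_mono hs; rwa [hf0] at this
  have hFfun : F = fun t => ∫ s in (0:ℝ)..t, f s := funext hF
  have hFderiv : ∀ s : ℝ, HasDerivAt F (f s) s := by
    intro s
    rw [hFfun]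
    exact intervalIntegral.integral_hasDerivAt_right (hf_cont.intervalIntegrable _ _)
      (hf_cont.stronglyMeasurable.stronglyMeasurableAtFilter)
      hf_cont.continuousAt
  have Fpos : ∀ s > (0:ℝ), 0 < F s := by
    intro s hs
    rw [hF]
    exact intervalIntegral.intervalIntegral_pos_of_pos_on (hf_cont.intervalIntegrable 0 s)
      (fun x hx => fpos x hx.1) hs
  have gpos : ∀ s > (0:ℝ), 0 < F s ^ (-(1:ℝ)/2) := fun s hs =>
    Real.rpow_pos_of_pos (Fpos s hs) _
  have Fcont : Continuous F := continuous_iff_continuousAt.2 fun s => (hFderiv s).continuousAt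
  have gcontOn : ContinuousOn (fun s => F s ^ (-(1:ℝ)/2)) (Ioi (0:ℝ)) := by
    intro s hs
    exact ((Real.continuousAt_rpow_const (F s) _ (Or.inl (Fpos s hs).ne')).comp
      Fcont.continuousAt).continuousWithinAt
  have hInt : ∀ a b : ℝ, 0 ≤ a → a ≤ b →
      IntervalIntegrable (fun s => F s ^ (-(1:ℝ)/2)) volume a b := by
    intro a b ha hab
    rw [intervalIntegrable_iff, uIoc_of_le hab]
    exact (hfin b (ha.trans hab)).mono_set (Ioc_subset_Ioc_left ha)
  have hmono : StrictMonoOn h (Ici (0:ℝ)) := by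
    intro a ha b hb hab
    have hadd := intervalIntegral.integral_add_adjacent_intervals
      (hInt 0 a le_rfl ha) (hInt a b ha hab.le)
    have hposint : 0 < ∫ s in a..b, F s ^ (-(1:ℝ)/2) :=
      intervalIntegral.intervalIntegral_pos_of_pos_on (hInt a b ha hab.le)
        (fun x hx => gpos x (lt_of_le_of_lt ha hx.1)) hab
    rw [hh a, hh b]
    linarith [hadd]
  have h0 : h 0 = 0 := by rw [hh]; simp
  have hU0 : U 0 = 0 := by
    have hinv0 : h (U 0) = 0 := by
      have := hU_inv 0 le_rfl; simpa using this
    rcases (hU_nonneg 0 le_rfl).lt_or_eq with hlt | heq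
    · exfalso
      have := hmono self_mem_Ici (le_of_lt hlt) hlt
      rw [h0, hinv0] at this
      exact lt_irrefl 0 this
    · exact heq.symm
  have Upos : ∀ t > (0:ℝ), 0 < U t := by
    intro t ht
    rcases (hU_nonneg t ht.le).lt_or_eq with hlt | heq
    · exact hlt
    · exfalso
      have : h (U t) = 0 := by rw [← heq, h0]
      rw [hU_inv t ht.le] at this
      nlinarith
  -- continuity of U at positive points
  have Ucont : ∀ t > (0:ℝ), ContinuousAt U t := by
    intro t ht
    rw [Metric.continuousAt_iff]
    intro ε hε
    have hupos : 0 < U t := Upos t ht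
    set u := U t with hu
    set ε' := min ε (u / 2) with hε'def
    have hε'pos : 0 < ε' := lt_min hε (by linarith)
    have hε'le : ε' ≤ ε := min_le_left _ _
    have hε'u : ε' ≤ u / 2 := min_le_right _ _
    have hmem1 : u - ε' ∈ Ici (0:ℝ) := by simp only [mem_Ici]; linarith
    have hmem2 : u + ε' ∈ Ici (0:ℝ) := by simp only [mem_Ici]; linarith
    have h1 : h (u - ε') < Real.sqrt 2 * t := by
      rw [← hU_inv t ht.le]
      exact hmono hmem1 (hU_nonneg t ht.le) (by linarith)
    have h2 : Real.sqrt 2 * t < h (u + ε') := by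
      rw [← hU_inv t ht.le]
      exact hmono (hU_nonneg t ht.le) hmem2 (by linarith)
    set d1 := (Real.sqrt 2 * t - h (u - ε')) / Real.sqrt 2 with hd1
    set d2 := (h (u + ε') - Real.sqrt 2 * t) / Real.sqrt 2 with hd2
    have hd1pos : 0 < d1 := div_pos (by linarith) sqrt2pos
    have hd2pos : 0 < d2 := div_pos (by linarith) sqrt2pos
    refine ⟨min (min d1 d2) t, lt_min (lt_min hd1pos hd2pos) ht, ?_⟩
    intro x hx
    rw [Real.dist_eq] at hx ⊢
    have hx1 : |x - t| < d1 := lt_of_lt_of_le hx (le_trans (min_le_left _ _) (min_le_left _ _))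
    have hx2 : |x - t| < d2 := lt_of_lt_of_le hx (le_trans (min_le_left _ _) (min_le_right _ _))
    have hxt : |x - t| < t := lt_of_lt_of_le hx (min_le_right _ _)
    have hxpos : 0 < x := by
      have := abs_lt.1 hxt
      linarith [this.1]
    have hhx : h (U x) = Real.sqrt 2 * x := hU_inv x hxpos.le
    have hlow : h (u - ε') < h (U x) := by
      rw [hhx]
      have : t - d1 < x := by linarith [(abs_lt.1 hx1).1]
      have : Real.sqrt 2 * (t - d1) < Real.sqrt 2 * x := by
        exact mul_lt_mul_of_pos_left this sqrt2pos
      calc h (u - ε') = Real.sqrt 2 * t - Real.sqrt 2 * d1 := by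
            rw [hd1]; field_simp; ring
        _ = Real.sqrt 2 * (t - d1) := by ring
        _ < Real.sqrt 2 * x := this
    have hhigh : h (U x) < h (u + ε') := by
      rw [hhx]
      have hxd : x < t + d2 := by linarith [(abs_lt.1 hx2).2]
      calc Real.sqrt 2 * x < Real.sqrt 2 * (t + d2) := mul_lt_mul_of_pos_left hxd sqrt2pos
        _ = Real.sqrt 2 * t + Real.sqrt 2 * d2 := by ring
        _ = h (u + ε') := by rw [hd2]; field_simp; ring
    have hUx_lo : u - ε' < U x := by
      by_contra hcon
      push_neg at hcon
      have := hmono.monotoneOn (hU_nonneg x hxpos.le) hmem1 hcon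
      linarith
    have hUx_hi : U x < u + ε' := by
      by_contra hcon
      push_neg at hcon
      have := hmono.monotoneOn hmem2 (hU_nonneg x hxpos.le) hcon
      linarith
    have : |U x - u| < ε' := abs_lt.2 ⟨by linarith, by linarith⟩
    exact lt_of_lt_of_le this hε'le
  -- derivative of h at positive points
  have hhfun : h = fun y => ∫ s in (0:ℝ)..y, F s ^ (-(1:ℝ)/2) := funext hh
  have hhderiv : ∀ v > (0:ℝ), HasDerivAt h (F v ^ (-(1:ℝ)/2)) v := by
    intro v hv
    rw [hhfun]
    exact intervalIntegral.integral_hasDerivAt_right (hInt 0 v le_rfl hv.le)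
      (gcontOn.stronglyMeasurableAtFilter isOpen_Ioi v hv)
      ((gcontOn v hv).continuousAt (Ioi_mem_nhds hv))
  refine ⟨hU0, fun t => Real.sqrt (2 * F (U t)), fun t ht => ?_⟩
  have hupos : (0:ℝ) < U t := Upos t ht
  have hFu : 0 < F (U t) := Fpos _ hupos
  have hU't : Real.sqrt (2 * F (U t)) = Real.sqrt 2 * Real.sqrt (F (U t)) :=
    Real.sqrt_mul (by norm_num) _
  have hval : (F (U t) ^ (-(1:ℝ)/2) / Real.sqrt 2)⁻¹ = Real.sqrt (2 * F (U t)) := by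
    rw [hU't]
    have hne : F (U t) ^ ((1:ℝ)/2) ≠ 0 := ne_of_gt (Real.rpow_pos_of_pos hFu _)
    rw [show (-(1:ℝ)/2) = -(1/2 : ℝ) by norm_num, Real.rpow_neg hFu.le, Real.sqrt_eq_rpow]
    field_simp
    rw [Real.sqrt_eq_rpow]
  have hderivU : HasDerivAt U (Real.sqrt (2 * F (U t))) t := by
    have hloc : ∀ᶠ x in nhds t, (fun y => h y / Real.sqrt 2) (U x) = x := by
      filter_upwards [Ioi_mem_nhds ht] with x hx
      show h (U x) / Real.sqrt 2 = x
      rw [hU_inv x (le_of_lt hx)]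
      field_simp
    have hderivh : HasDerivAt (fun y => h y / Real.sqrt 2)
        (F (U t) ^ (-(1:ℝ)/2) / Real.sqrt 2) (U t) :=
      (hhderiv (U t) hupos).div_const _
    have hne : F (U t) ^ (-(1:ℝ)/2) / Real.sqrt 2 ≠ 0 :=
      ne_of_gt (div_pos (gpos _ hupos) sqrt2pos)
    have := hderivh.of_local_left_inverse (Ucont t ht) hne hloc
    rwa [hval] at this
  refine ⟨hderivU, ?_, ?_⟩
  · -- second derivative
    have hinner : HasDerivAt (fun x => 2 * F (U x))
        (2 * (f (U t) * Real.sqrt (2 * F (U t)))) t := by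
      have := ((hFderiv (U t)).comp t hderivU).const_mul 2
      simpa [mul_comm, mul_assoc] using this
    have hne : 2 * F (U t) ≠ 0 := by positivity
    have := hinner.sqrt hne
    have heq : 2 * (f (U t) * Real.sqrt (2 * F (U t))) / (2 * Real.sqrt (2 * F (U t)))
        = f (U t) := by
      have hs : Real.sqrt (2 * F (U t)) ≠ 0 := by positivity
      field_simp
    rwa [heq] at this
  · rw [Real.sq_sqrt (by positivity)]
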